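/- Let T_C be a complete binary tree of depth D ≥ 1, and T an internal tree of T_C with at least 2 leaves. Then consecutive leaves of T form successive leaf transitions: for each 1 ≤ n < |L(T)|, the pair (L_n(T), L_{n+1}(T)) lies in S(T_C), where the leftmost leaf L_1(T) lies in B_l(T_C) and the last leaf lies in B_r(T_C). Conversely, any path of N-1 transitions in S(T_C) starting at a vertex in B_l(T_C) and ending at a vertex in B_r(T_C) visits exactly the leaves, in order, of some internal tree of T_C with N leaves. -/

import Mathlib

/-- Full binary trees: every vertex has 0 or 2 children. -/
inductive FBT where
  | leaf : FBT
  | node : FBT → FBT → FBT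
deriving DecidableEq

namespace FBT

/-- Depth of a full binary tree. -/
def depth : FBT → ℕ
  | leaf => 0
  | node a b => max a.depth b.depth + 1

/-- Positions (reversed root-paths: head is the edge nearest the vertex) of the
leaves of `T`, in left-to-right order. -/
def leaves : FBT → List (List Bool)
  | leaf => [[]]
  | node a b => a.leaves.map (· ++ [false]) ++ b.leaves.map (· ++ [true])

/-- Total number of vertices. -/
def numNodes : FBT → ℕ
  | leaf => 1
  | node a b => a.numNodes + b.numNodes + 1

/-- Number of internal (non-leaf) vertices. -/
def internals : FBT → ℕ
  | leaf => 0
  | node a b => a.internals + b.internals + 1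

/-- The recursive probability function π of the stick-breaking prior:
`pi l T pos` where `pos` is the (reversed) position of the root of `T`. -/
def pi (l : List Bool → ℝ) : FBT → List Bool → ℝ
  | leaf, pos => l pos
  | node a b, pos => (1 - l pos) * pi l a (false :: pos) * pi l b (true :: pos)

/-- Probability of an internal tree: `p(T) = π(root)`. -/
def pTree (l : List Bool → ℝ) (T : FBT) : ℝ := pi l T []

/-- The memoized value m̃, with `m̃(parent(root)) = 1`. -/
noncomputable def mt (l : List Bool → ℝ) : List Bool → ℝ
  | [] => 1 - l []
  | (b :: p) => Real.sqrt (mt l p) * (1 - l (b :: p))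

/-- The memoized value m at a vertex: `m(v) = m̃(parent v)^(1/2) · l v`. -/
noncomputable def mleaf (l : List Bool → ℝ) : List Bool → ℝ
  | [] => l []
  | (b :: p) => Real.sqrt (mt l p) * l (b :: p)

/-- `m̃(parent v)`, with the convention `m̃(parent root) = 1`. -/
noncomputable def mparent (l : List Bool → ℝ) : List Bool → ℝ
  | [] => 1
  | (_ :: p) => mt l p

/-- The set of internal trees of the complete binary tree of depth `D`,
i.e. full binary trees of depth at most `D`. -/
def trees : ℕ → Finset FBT
  | 0 => {leaf}
  | (D+1) => insert leaf ((trees D ×ˢ trees D).image (fun p => node p.1 p.2))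

/-- Consecutive-leaf pairs of a single tree. -/
def transitions (T : FBT) : Finset (List Bool × List Bool) :=
  (T.leaves.zip T.leaves.tail).toFinset

/-- The set `S(T_C)` of successive leaf transitions of the complete binary
tree of depth `D`. -/
def S (D : ℕ) : Finset (List Bool × List Bool) := (trees D).biUnion transitions

/-- The left boundary of the complete binary tree of depth `D`. -/
def Bl (D : ℕ) : Finset (List Bool) :=
  (Finset.range (D+1)).image (fun k => List.replicate k false)

/-- The right boundary of the complete binary tree of depth `D`. -/
def Br (D : ℕ) : Finset (List Bool) :=
  (Finset.range (D+1)).image (fun k => List.replicate k true)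

/-- The marginalisation dynamic-programming table (indexed from `n = 1`). -/
def M (S : Finset (List Bool × List Bool)) (Bl : Finset (List Bool))
    (w : ℕ → List Bool → ℝ) (mw : List Bool → ℝ) : ℕ → List Bool → ℝ
  | 0, _ => 0
  | 1, v => if v ∈ Bl then w 1 v * mw v else 0
  | (n+2), v => w (n+2) v * mw v *
      ∑ p ∈ S.filter (fun p => p.2 = v), M S Bl w mw (n+1) p.1

/-- The Viterbi-style max-product dynamic-programming table. -/
def Mstar (S : Finset (List Bool × List Bool)) (Bl : Finset (List Bool))
    (w : ℕ → List Bool → NNReal) (mw : List Bool → NNReal) : ℕ → List Bool → NNReal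
  | 0, _ => 0
  | 1, v => if v ∈ Bl then w 1 v * mw v else 0
  | (n+2), v => w (n+2) v * mw v *
      (S.filter (fun p => p.2 = v)).sup (fun p => Mstar S Bl w mw (n+1) p.1)

/-- The complete binary tree of depth `D`, as a full binary tree. -/
def completeTree : ℕ → FBT
  | 0 => leaf
  | (D+1) => node (completeTree D) (completeTree D)

theorem leaves_ne_nil (T : FBT) : T.leaves ≠ [] := by
  cases T with
  | leaf => simp [leaves]
  | node a b =>
    simp only [leaves, ne_eq, List.append_eq_nil_iff, List.map_eq_nil_iff, not_and]
    intro h; exact absurd h (leaves_ne_nil a)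

theorem mem_trees_iff (T : FBT) (D : ℕ) : T ∈ trees D ↔ T.depth ≤ D := by
  induction D generalizing T with
  | zero =>
    cases T with
    | leaf => simp [trees, depth]
    | node a b => simp [trees, depth]
  | succ D ih =>
    cases T with
    | leaf => simp [trees, depth]
    | node a b =>
      simp only [trees, Finset.mem_insert, Finset.mem_image, Finset.mem_product, Prod.exists,
        depth]
      constructor
      · rintro (h | ⟨x, y, ⟨hx, hy⟩, h⟩)
        · exact absurd h (by simp)
        · obtain ⟨rfl, rfl⟩ : x = a ∧ y = b := by
            constructor <;> injection h <;> simp_all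
          have h1 := (ih x).1 hx
          have h2 := (ih y).1 hy
          omega
      · intro h
        refine Or.inr ⟨a, b, ⟨(ih a).2 ?_, (ih b).2 ?_⟩, rfl⟩ <;> omega

theorem head_leaves (T : FBT) : ∃ k ≤ T.depth, T.leaves.head? = some (List.replicate k false) := by
  induction T with
  | leaf => exact ⟨0, le_refl _, rfl⟩
  | node a b iha ihb =>
    obtain ⟨k, hk, hh⟩ := iha
    refine ⟨k + 1, ?_, ?_⟩
    · simp [depth]; omega
    · rw [leaves, List.head?_append_of_ne_nil _ (by simp [leaves_ne_nil a]),
        List.head?_map, hh, List.replicate_succ']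
      rfl

theorem getLast_leaves (T : FBT) :
    ∃ k ≤ T.depth, T.leaves.getLast? = some (List.replicate k true) := by
  induction T with
  | leaf => exact ⟨0, le_refl _, rfl⟩
  | node a b iha ihb =>
    obtain ⟨k, hk, hh⟩ := ihb
    refine ⟨k + 1, ?_, ?_⟩
    · simp [depth]; omega
    · rw [leaves, List.getLast?_append, List.getLast?_map, hh, List.replicate_succ']
      simp

theorem mem_Bl {p : List Bool} {D : ℕ} : p ∈ Bl D ↔ ∃ k ≤ D, p = List.replicate k false := by
  simp only [Bl, Finset.mem_image, Finset.mem_range, Nat.lt_succ_iff]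
  aesop

theorem mem_Br {p : List Bool} {D : ℕ} : p ∈ Br D ↔ ∃ k ≤ D, p = List.replicate k true := by
  simp only [Br, Finset.mem_image, Finset.mem_range, Nat.lt_succ_iff]
  aesop

theorem replicate_eq {k k' : ℕ} (h : List.replicate k false = List.replicate k' true) :
    k = 0 ∧ k' = 0 := by
  have hl : k = k' := by
    have := congrArg List.length h; simpa using this
  subst hl
  cases k with
  | zero => exact ⟨rfl, rfl⟩
  | succ n => simp [List.replicate_succ] at h


theorem zip_tail_append {α : Type*} :
    ∀ (l1 l2 : List α) (h1 : l1 ≠ []) (h2 : l2 ≠ []),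
    (l1 ++ l2).zip (l1 ++ l2).tail =
      l1.zip l1.tail ++ (l1.getLast h1, l2.head h2) :: l2.zip l2.tail
  | [], _, h1, _ => absurd rfl h1
  | [x], l2, _, h2 => by
    cases l2 with
    | nil => exact absurd rfl h2
    | cons y t => simp [List.zip]
  | (x :: y :: t), l2, _, h2 => by
    have := zip_tail_append (y :: t) l2 (by simp) h2
    simp only [List.cons_append, List.tail_cons, List.zip_cons_cons] at this ⊢
    rw [this]
    simp [List.getLast]

theorem zip_tail_map {α β : Type*} (f : α → β) (l : List α) :
    (l.map f).zip (l.map f).tail = (l.zip l.tail).map (Prod.map f f) := by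
  rw [← List.map_tail, List.zip_map]

def lcomb : ℕ → FBT
  | 0 => leaf
  | n + 1 => node (lcomb n) leaf

def rcomb : ℕ → FBT
  | 0 => leaf
  | n + 1 => node leaf (rcomb n)

theorem lcomb_depth (n : ℕ) : (lcomb n).depth = n := by
  induction n with
  | zero => rfl
  | succ n ih => simp [lcomb, depth, ih]

theorem rcomb_depth (n : ℕ) : (rcomb n).depth = n := by
  induction n with
  | zero => rfl
  | succ n ih => simp [rcomb, depth, ih]

theorem lcomb_head (n : ℕ) : (lcomb n).leaves.head? = some (List.replicate n false) := by
  induction n with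
  | zero => rfl
  | succ n ih =>
    rw [lcomb, leaves, List.head?_append_of_ne_nil _ (by simp [leaves_ne_nil]),
      List.head?_map, ih, List.replicate_succ']
    rfl

theorem rcomb_getLast (n : ℕ) : (rcomb n).leaves.getLast? = some (List.replicate n true) := by
  induction n with
  | zero => rfl
  | succ n ih =>
    rw [rcomb, leaves, List.getLast?_append, List.getLast?_map, ih, List.replicate_succ']
    simp

theorem mem_S_iff {D : ℕ} {u v : List Bool} :
    (u, v) ∈ S D ↔ ∃ T ∈ trees D, (u, v) ∈ T.leaves.zip T.leaves.tail := by
  simp [S, transitions, Finset.mem_biUnion, List.mem_toFinset]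

theorem S_succ {D : ℕ} {u v : List Bool} :
    (u, v) ∈ S (D + 1) ↔
      (∃ a b, a ≤ D ∧ b ≤ D ∧ u = List.replicate a true ++ [false] ∧
          v = List.replicate b false ++ [true]) ∨
      (∃ u' v' c, u = u' ++ [c] ∧ v = v' ++ [c] ∧ (u', v') ∈ S D) := by
  constructor
  · rw [mem_S_iff]
    rintro ⟨T, hT, hmem⟩
    cases T with
    | leaf => simp [leaves] at hmem
    | node A B =>
      have hA : A ∈ trees D ∧ B ∈ trees D := by
        rw [mem_trees_iff] at hT ⊢
        rw [mem_trees_iff (D := D)]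
        simp [depth] at hT; omega
      rw [leaves, zip_tail_append _ _ (by simp [leaves_ne_nil]) (by simp [leaves_ne_nil])] at hmem
      rw [List.mem_append, List.mem_cons] at hmem
      rcases hmem with h | h | h
      · rw [zip_tail_map] at h
        obtain ⟨⟨u', v'⟩, hin, heq⟩ := List.mem_map.1 h
        obtain ⟨h1, h2⟩ : u' ++ [false] = u ∧ v' ++ [false] = v := by
          simpa [Prod.ext_iff, Prod.map] using heq
        exact Or.inr ⟨u', v', false, h1.symm, h2.symm, mem_S_iff.2 ⟨A, hA.1, hin⟩⟩
      · obtain ⟨a, ha, hga⟩ := getLast_leaves A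
        obtain ⟨b, hb, hgb⟩ := head_leaves B
        have hda := (mem_trees_iff A D).1 hA.1
        have hdb := (mem_trees_iff B D).1 hA.2
        obtain ⟨h1, h2⟩ := Prod.ext_iff.1 h
        simp only at h1 h2
        refine Or.inl ⟨a, b, le_trans ha hda, le_trans hb hdb, ?_, ?_⟩
        · have e1 : (List.map (fun x => x ++ [false]) A.leaves).getLast? =
              some (List.replicate a true ++ [false]) := by
            rw [List.getLast?_map, hga]; rfl
          rw [List.getLast?_eq_getLast (by simp [leaves_ne_nil])] at e1
          rw [h1]
          exact Option.some_injective _ e1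
        · have e1 : (List.map (fun x => x ++ [true]) B.leaves).head? =
              some (List.replicate b false ++ [true]) := by
            rw [List.head?_map, hgb]; rfl
          rw [List.head?_eq_head (by simp [leaves_ne_nil])] at e1
          rw [h2]
          exact Option.some_injective _ e1
      · rw [zip_tail_map] at h
        obtain ⟨⟨u', v'⟩, hin, heq⟩ := List.mem_map.1 h
        obtain ⟨h1, h2⟩ : u' ++ [true] = u ∧ v' ++ [true] = v := by
          simpa [Prod.ext_iff, Prod.map] using heq
        exact Or.inr ⟨u', v', true, h1.symm, h2.symm, mem_S_iff.2 ⟨B, hA.2, hin⟩⟩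
  · rintro (⟨a, b, ha, hb, rfl, rfl⟩ | ⟨u', v', c, rfl, rfl, h⟩)
    · refine mem_S_iff.2 ⟨node (rcomb a) (lcomb b), ?_, ?_⟩
      · rw [mem_trees_iff]
        simp [depth, rcomb_depth, lcomb_depth]; omega
      · have hn1 : List.map (fun x => x ++ [false]) (rcomb a).leaves ≠ [] := by
          simp [leaves_ne_nil]
        have hn2 : List.map (fun x => x ++ [true]) (lcomb b).leaves ≠ [] := by
          simp [leaves_ne_nil]
        have e1 : (List.map (fun x => x ++ [false]) (rcomb a).leaves).getLast hn1 =
            List.replicate a true ++ [false] := by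
          apply Option.some_injective
          rw [← List.getLast?_eq_getLast, List.getLast?_map, rcomb_getLast]; rfl
        have e2 : (List.map (fun x => x ++ [true]) (lcomb b).leaves).head hn2 =
            List.replicate b false ++ [true] := by
          apply Option.some_injective
          rw [← List.head?_eq_head, List.head?_map, lcomb_head]; rfl
        rw [leaves, zip_tail_append _ _ hn1 hn2, e1, e2]
        exact List.mem_append_right _ (List.mem_cons_self)
    · obtain ⟨T', hT', hmem⟩ := mem_S_iff.1 h
      cases c with
      | false =>
        refine mem_S_iff.2 ⟨node T' leaf, ?_, ?_⟩
        · rw [mem_trees_iff] at hT' ⊢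
          simp [depth]; omega
        · rw [leaves, zip_tail_append _ _ (by simp [leaves_ne_nil]) (by simp [leaves_ne_nil])]
          refine List.mem_append_left _ ?_
          rw [zip_tail_map]
          exact List.mem_map.2 ⟨(u', v'), hmem, rfl⟩
      | true =>
        refine mem_S_iff.2 ⟨node leaf T', ?_, ?_⟩
        · rw [mem_trees_iff] at hT' ⊢
          simp [depth]; omega
        · rw [leaves, zip_tail_append _ _ (by simp [leaves_ne_nil]) (by simp [leaves_ne_nil])]
          refine List.mem_append_right _ ?_
          rw [List.mem_cons]
          right
          rw [zip_tail_map]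
          exact List.mem_map.2 ⟨(u', v'), hmem, rfl⟩

theorem suffix_true {D : ℕ} : ∀ vs : List (List Bool), vs ≠ [] →
    (∀ u v : List Bool, (u, v) ∈ vs.zip vs.tail → (u, v) ∈ S (D + 1)) →
    (∀ p, vs.head? = some p → ∃ q, p = q ++ [true]) →
    ∃ R : List (List Bool), R ≠ [] ∧ vs = R.map (· ++ [true]) ∧
      (∀ u v : List Bool, (u, v) ∈ R.zip R.tail → (u, v) ∈ S D)
  | [], h, _, _ => absurd rfl h
  | [x], _, _, hh => by
    obtain ⟨q, rfl⟩ := hh x rfl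
    exact ⟨[q], by simp, by simp, by simp⟩
  | x :: y :: t, _, hchain, hh => by
    obtain ⟨q, rfl⟩ := hh _ rfl
    have hxy : (q ++ [true], y) ∈ S (D + 1) := hchain _ _ (by simp)
    rcases S_succ.1 hxy with ⟨a, b, _, _, hxe, _⟩ | ⟨u', v', c, hxe, hye, hS⟩
    · obtain ⟨-, h2⟩ := List.append_inj' hxe rfl
      simp at h2
    · obtain ⟨rfl, h2⟩ := List.append_inj' hxe rfl
      obtain rfl : c = true := by simpa using h2
      obtain ⟨R', hRne, hmap, hchainR⟩ :=
        suffix_true (y :: t) (by simp)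
          (fun u v huv => hchain u v (List.mem_cons_of_mem _ huv))
          (fun p hp => ⟨v', by simpa [hye] using hp.symm⟩)
      cases R' with
      | nil => exact absurd rfl hRne
      | cons w t'' =>
        obtain rfl : w = v' := by
          have := congrArg List.head? hmap
          simp [hye] at this
          exact this.symm
        refine ⟨q :: w :: t'', by simp, by rw [List.map_cons, ← hmap], ?_⟩
        intro u v huv
        simp only [List.tail_cons, List.zip_cons_cons, List.mem_cons] at huv
        rcases huv with h | h
        · rw [Prod.mk.injEq] at h
          obtain ⟨rfl, rfl⟩ := h
          exact hS
        · exact hchainR u v h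

theorem dummy1 : True := trivial

theorem split {D : ℕ} : ∀ vs : List (List Bool), vs ≠ [] →
    (∀ u v : List Bool, (u, v) ∈ vs.zip vs.tail → (u, v) ∈ S (D + 1)) →
    (∀ p, vs.head? = some p → ∃ q, p = q ++ [false]) →
    (∀ p, vs.getLast? = some p → ∃ q, p = q ++ [true]) →
    ∃ L R : List (List Bool), L ≠ [] ∧ R ≠ [] ∧
      vs = L.map (· ++ [false]) ++ R.map (· ++ [true]) ∧
      (∀ u v : List Bool, (u, v) ∈ L.zip L.tail → (u, v) ∈ S D) ∧
      (∀ u v : List Bool, (u, v) ∈ R.zip R.tail → (u, v) ∈ S D) ∧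
      (∃ a ≤ D, L.getLast? = some (List.replicate a true)) ∧
      (∃ b ≤ D, R.head? = some (List.replicate b false))
  | [], h, _, _, _ => absurd rfl h
  | [x], _, _, hh, hl => by
    obtain ⟨q, rfl⟩ := hh x rfl
    obtain ⟨q', he⟩ := hl (q ++ [false]) rfl
    obtain ⟨-, h2⟩ := List.append_inj' he rfl
    simp at h2
  | x :: y :: t, _, hchain, hh, hl => by
    obtain ⟨q, rfl⟩ := hh _ rfl
    have hxy : (q ++ [false], y) ∈ S (D + 1) := hchain _ _ (by simp)
    rcases S_succ.1 hxy with ⟨a, b, ha, hb, hxe, hye⟩ | ⟨u', v', c, hxe, hye, hS⟩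
    · obtain ⟨rfl, -⟩ := List.append_inj' hxe rfl
      obtain ⟨R', hRne, hmap, hchainR⟩ :=
        suffix_true (y :: t) (by simp)
          (fun u v huv => hchain u v (List.mem_cons_of_mem _ huv))
          (fun p hp => ⟨List.replicate b false, by simpa [hye] using hp.symm⟩)
      cases R' with
      | nil => exact absurd rfl hRne
      | cons w t'' =>
        obtain rfl : w = List.replicate b false := by
          have := congrArg List.head? hmap
          simp [hye] at this
          exact this.symm
        refine ⟨[List.replicate a true], List.replicate b false :: t'', by simp, by simp,
          by rw [← hmap]; simp, by simp, hchainR, ⟨a, ha, by simp⟩, ⟨b, hb, by simp⟩⟩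
    · obtain ⟨rfl, h2⟩ := List.append_inj' hxe rfl
      obtain rfl : c = false := by simpa using h2
      obtain ⟨L', R', hLne, hRne, hmap, hchainL, hchainR, hLlast, hRhead⟩ :=
        split (y :: t) (by simp)
          (fun u v huv => hchain u v (List.mem_cons_of_mem _ huv))
          (fun p hp => ⟨v', by simpa [hye] using hp.symm⟩)
          (fun p hp => hl p (by rw [List.getLast?_cons_cons]; exact hp))
      cases L' with
      | nil => exact absurd rfl hLne
      | cons w t'' =>
        obtain rfl : w = v' := by
          have := congrArg List.head? hmap
          rw [List.head?_append_of_ne_nil _ (by simp)] at this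
          simp [hye] at this
          exact this.symm
        refine ⟨q :: w :: t'', R', by simp, hRne,
          by rw [List.map_cons, List.cons_append, ← hmap], ?_, hchainR, ?_, hRhead⟩
        · intro u v huv
          simp only [List.tail_cons, List.zip_cons_cons, List.mem_cons] at huv
          rcases huv with h | h
          · rw [Prod.mk.injEq] at h
            obtain ⟨rfl, rfl⟩ := h
            exact hS
          · exact hchainL u v h
        · obtain ⟨a, ha, hL⟩ := hLlast
          exact ⟨a, ha, by rw [List.getLast?_cons_cons]; exact hL⟩

theorem getLast_in_zip {α : Type*} : ∀ (x y : α) (t : List α),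
    ∃ u, (u, (y :: t).getLast (by simp)) ∈ (x :: y :: t).zip (y :: t)
  | x, y, [] => ⟨x, by simp⟩
  | x, y, z :: t' => by
    obtain ⟨u, hu⟩ := getLast_in_zip y z t'
    refine ⟨u, ?_⟩
    rw [List.getLast_cons (by simp)]
    exact List.mem_cons_of_mem _ hu

theorem conv : ∀ (D : ℕ) (vs : List (List Bool)), vs ≠ [] →
    (∀ p, vs.head? = some p → p ∈ Bl D) →
    (∀ p, vs.getLast? = some p → p ∈ Br D) →
    (∀ u v : List Bool, (u, v) ∈ vs.zip vs.tail → (u, v) ∈ S D) →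
    ∃ T ∈ trees D, T.leaves = vs := by
  intro D
  induction D with
  | zero =>
    rintro (_ | ⟨x, t⟩) hne hhead hlast hchain
    · exact absurd rfl hne
    · obtain ⟨k, hk, rfl⟩ := mem_Bl.1 (hhead x rfl)
      obtain rfl : k = 0 := by omega
      cases t with
      | nil => exact ⟨leaf, by simp [trees], by simp [leaves]⟩
      | cons y t' =>
        have := hchain _ y (List.mem_cons_self)
        obtain ⟨T, hT, hmem⟩ := mem_S_iff.1 this
        have : T = leaf := by simpa [trees] using hT
        subst this
        simp [leaves] at hmem
  | succ D ih =>
    rintro (_ | ⟨x, t⟩) hne hhead hlast hchain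
    · exact absurd rfl hne
    · obtain ⟨k, hk, rfl⟩ := mem_Bl.1 (hhead _ rfl)
      cases t with
      | nil =>
        obtain ⟨k', hk', he⟩ := mem_Br.1 (hlast _ rfl)
        obtain ⟨rfl, rfl⟩ := replicate_eq he
        exact ⟨leaf, by rw [mem_trees_iff]; simp [depth], by simp [leaves]⟩
      | cons y t' =>
        -- x is nonempty, so k ≥ 1
        have hxy := hchain _ y (List.mem_cons_self)
        have hk1 : 1 ≤ k := by
          rcases S_succ.1 hxy with ⟨a, b, _, _, hxe, _⟩ | ⟨u', v', c, hxe, _, _⟩ <;>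
          · by_contra h
            obtain rfl : k = 0 := by omega
            simp at hxe
        -- last element ends with true and is nonempty
        obtain ⟨u0, hu0⟩ := getLast_in_zip (List.replicate k false) y t'
        have hlz := hchain _ _ hu0
        have hlastmem : (y :: t').getLast (by simp) ∈ Br (D + 1) := by
          apply hlast
          rw [List.getLast?_cons_cons, List.getLast?_eq_getLast (by simp)]
        obtain ⟨k', hk', hke⟩ := mem_Br.1 hlastmem
        have hk'1 : 1 ≤ k' := by
          rcases S_succ.1 hlz with ⟨a, b, _, _, _, hye⟩ | ⟨u', v', c, _, hye, _⟩ <;>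
          · by_contra h
            obtain rfl : k' = 0 := by omega
            rw [hke] at hye
            simp at hye
        -- apply split
        obtain ⟨L, R, hLne, hRne, hmap, hchainL, hchainR, ⟨a, ha, hLlast⟩, ⟨b, hb, hRhead⟩⟩ :=
          split (D := D) (List.replicate k false :: y :: t') (by simp) hchain
            (fun p hp => ⟨List.replicate (k - 1) false, by
              obtain rfl : p = List.replicate k false := by simpa using hp.symm
              rw [← List.replicate_succ']
              congr 1
              omega⟩)
            (fun p hp => ⟨List.replicate (k' - 1) true, by
              rw [List.getLast?_cons_cons, List.getLast?_eq_getLast (by simp)] at hp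
              obtain rfl : p = List.replicate k' true := by rw [← hke]; exact (Option.some_injective _ hp).symm
              rw [← List.replicate_succ']
              congr 1
              omega⟩)
        -- head of L
        cases L with
        | nil => exact absurd rfl hLne
        | cons w tL =>
        obtain rfl : w = List.replicate (k - 1) false := by
          have := congrArg List.head? hmap
          rw [List.head?_append_of_ne_nil _ (by simp)] at this
          simp only [List.head?_cons, List.head?_map, Option.map_some] at this
          have h2 : List.replicate k false = w ++ [false] := by simpa using this
          have h3 : List.replicate k false = List.replicate (k - 1) false ++ [false] := by
            rw [← List.replicate_succ']
            congr 1
            omega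
          rw [h3] at h2
          exact ((List.append_inj' h2 rfl).1).symm
        -- getLast of R
        cases R with
        | nil => exact absurd rfl hRne
        | cons wR tR =>
        have hRlast : (wR :: tR).getLast? = some (List.replicate (k' - 1) true) := by
          have := congrArg List.getLast? hmap
          rw [List.getLast?_append, List.getLast?_map] at this
          rw [List.getLast?_cons_cons, List.getLast?_eq_getLast (by simp), hke] at this
          cases hgl : (wR :: tR).getLast? with
          | none => simp at hgl
          | some g =>
            rw [hgl] at this
            simp only [Option.map_some, Option.or_some] at this
            have h2 : List.replicate k' true = g ++ [true] := by simpa using this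
            have h3 : List.replicate k' true = List.replicate (k' - 1) true ++ [true] := by
              rw [← List.replicate_succ']
              congr 1
              omega
            rw [h3] at h2
            exact congrArg some ((List.append_inj' h2 rfl).1.symm)
        -- apply IH
        obtain ⟨A, hA, hAleaves⟩ := ih (List.replicate (k - 1) false :: tL) (by simp)
          (fun p hp => by
            obtain rfl : p = List.replicate (k - 1) false := by simpa using hp.symm
            exact mem_Bl.2 ⟨k - 1, by omega, rfl⟩)
          (fun p hp => by
            rw [hLlast] at hp
            obtain rfl := Option.some_injective _ hp.symm
            exact mem_Br.2 ⟨a, ha, rfl⟩)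
          hchainL
        obtain ⟨B, hB, hBleaves⟩ := ih (wR :: tR) (by simp)
          (fun p hp => by
            rw [hRhead] at hp
            obtain rfl := Option.some_injective _ hp.symm
            exact mem_Bl.2 ⟨b, hb, rfl⟩)
          (fun p hp => by
            rw [hRlast] at hp
            obtain rfl := Option.some_injective _ hp.symm
            exact mem_Br.2 ⟨k' - 1, by omega, rfl⟩)
          hchainR
        refine ⟨node A B, ?_, ?_⟩
        · rw [mem_trees_iff] at hA hB ⊢
          simp only [depth]
          omega
        · rw [leaves, hAleaves, hBleaves, ← hmap]

end FBT
/-- consecutive leaves of an internal tree form successive leaf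
transitions (starting in the left boundary and ending in the right boundary),
and conversely every path of `N - 1` transitions from the left boundary to the
right boundary visits exactly the leaves, in order, of some internal tree with
`N` leaves. -/
theorem stmt5 (D : ℕ) (hD : 1 ≤ D) :
    (∀ T ∈ FBT.trees D, 2 ≤ T.leaves.length →
      (∀ u v : List Bool, (u, v) ∈ T.leaves.zip T.leaves.tail → (u, v) ∈ FBT.S D) ∧
      (∀ p, T.leaves.head? = some p → p ∈ FBT.Bl D) ∧
      (∀ p, T.leaves.getLast? = some p → p ∈ FBT.Br D)) ∧
    (∀ (N : ℕ) (vs : List (List Bool)), vs.length = N → 1 ≤ N →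
      (∀ p, vs.head? = some p → p ∈ FBT.Bl D) →
      (∀ p, vs.getLast? = some p → p ∈ FBT.Br D) →
      (∀ u v : List Bool, (u, v) ∈ vs.zip vs.tail → (u, v) ∈ FBT.S D) →
      ∃ T ∈ FBT.trees D, T.leaves = vs) := by
  constructor
  · intro T hT _
    refine ⟨fun u v huv => FBT.mem_S_iff.2 ⟨T, hT, huv⟩, fun p hp => ?_, fun p hp => ?_⟩
    · obtain ⟨k, hk, hh⟩ := FBT.head_leaves T
      rw [hh] at hp
      obtain rfl := Option.some_injective _ hp.symm
      exact FBT.mem_Bl.2 ⟨k, le_trans hk ((FBT.mem_trees_iff T D).1 hT), rfl⟩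
    · obtain ⟨k, hk, hh⟩ := FBT.getLast_leaves T
      rw [hh] at hp
      obtain rfl := Option.some_injective _ hp.symm
      exact FBT.mem_Br.2 ⟨k, le_trans hk ((FBT.mem_trees_iff T D).1 hT), rfl⟩
  · intro N vs hlen hN hhead hlast hchain
    refine FBT.conv D vs ?_ hhead hlast hchain
    intro h
    subst h
    simp at hlen
    omega
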